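/- For the potential function on allocations, the marginal value P_C(S) − P_C(S − S_i) equals the Shapley value of player i in the cooperative game (N, C') where C'(T) = C(∪_{j∈T} S_j): that is, P_C(S) − P_C(S − S_i) = Σ_{T ⊆ N−{i}} [|T|!·(n−|T|−1)!/n!] · (C'(T∪{i}) − C'(T)). -/

import Mathlib

open Finset

variable {α : Type*}

noncomputable def potential [DecidableEq α] (n : ℕ)
    (C : Finset α → ℝ) (S : Fin n → Finset α) : ℝ :=
  ∑ I ∈ (univ : Finset (Fin n)).powerset.filter (· ≠ ∅),
    C (I.biUnion S) / ((I.card : ℝ) * (n.choose I.card : ℝ))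

lemma biUnion_update_empty [DecidableEq α] {n : ℕ} (S : Fin n → Finset α)
    (i : Fin n) (I : Finset (Fin n)) :
    I.biUnion (Function.update S i ∅) = (I.erase i).biUnion S := by
  ext x
  simp only [mem_biUnion, mem_erase, Function.update_apply]
  constructor
  · rintro ⟨j, hj, hx⟩
    by_cases h : j = i
    · simp [h] at hx
    · exact ⟨j, ⟨h, hj⟩, by simpa [h] using hx⟩
  · rintro ⟨j, ⟨hji, hj⟩, hx⟩
    exact ⟨j, hj, by simpa [hji] using hx⟩

lemma coeff_eq (n t : ℕ) (h : t + 1 ≤ n) :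
    ((t.factorial : ℝ) * ((n - t - 1).factorial : ℝ) / (n.factorial : ℝ))
      = 1 / (((t + 1 : ℕ) : ℝ) * (n.choose (t + 1) : ℝ)) := by
  have key := Nat.choose_mul_factorial_mul_factorial h
  have hnt : n - (t + 1) = n - t - 1 := by omega
  rw [hnt, Nat.factorial_succ] at key
  have key' : (n.choose (t + 1) : ℝ) * ((t + 1) * t.factorial) * (n - t - 1).factorial
      = (n.factorial : ℝ) := by exact_mod_cast congrArg (Nat.cast (R := ℝ)) key
  have h1 : (0 : ℝ) < n.choose (t + 1) := by
    exact_mod_cast Nat.choose_pos h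
  have h2 : (0 : ℝ) < n.factorial := by exact_mod_cast n.factorial_pos
  field_simp
  push_cast
  nlinarith [key']

theorem stmt19 [DecidableEq α] (n : ℕ) (M : Fin n → Finset α)
    (hM : ∀ i j : Fin n, i ≠ j → Disjoint (M i) (M j))
    (C : Finset α → ℝ) (hC0 : C ∅ = 0)
    (S : Fin n → Finset α) (hS : ∀ i, S i ⊆ M i) (i : Fin n) :
    potential n C S - potential n C (Function.update S i ∅) =
      ∑ T ∈ ((univ : Finset (Fin n)).erase i).powerset,
        ((T.card.factorial : ℝ) * ((n - T.card - 1).factorial : ℝ) /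
            (n.factorial : ℝ)) *
          (C ((insert i T).biUnion S) - C (T.biUnion S)) := by
  classical
  unfold potential
  rw [← Finset.sum_sub_distrib]
  set A := (univ : Finset (Fin n)).powerset.filter (· ≠ ∅) with hA
  rw [← Finset.sum_filter_add_sum_filter_not A (fun I => i ∈ I)]
  have hzero : ∑ I ∈ A.filter (fun I => ¬ i ∈ I),
      (C (I.biUnion S) / ((I.card : ℝ) * (n.choose I.card : ℝ)) -
        C (I.biUnion (Function.update S i ∅)) / ((I.card : ℝ) * (n.choose I.card : ℝ))) = 0 := by
    apply Finset.sum_eq_zero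
    intro I hI
    rw [Finset.mem_filter] at hI
    rw [biUnion_update_empty, Finset.erase_eq_of_notMem hI.2]
    ring
  rw [hzero, add_zero]
  apply Finset.sum_nbij' (fun I => I.erase i) (fun T => insert i T)
  · intro I hI
    simp only [hA, Finset.mem_filter, Finset.mem_powerset] at hI
    rw [Finset.mem_powerset]
    exact Finset.erase_subset_erase _ hI.1.1
  · intro T hT
    rw [Finset.mem_powerset] at hT
    simp only [hA, Finset.mem_filter, Finset.mem_powerset]
    refine ⟨⟨Finset.subset_univ _, ?_⟩, Finset.mem_insert_self _ _⟩
    simp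
  · intro I hI
    simp only [hA, Finset.mem_filter] at hI
    exact Finset.insert_erase hI.2
  · intro T hT
    rw [Finset.mem_powerset] at hT
    have : i ∉ T := fun h => (Finset.mem_erase.mp (hT h)).1 rfl
    exact Finset.erase_insert this
  · intro I hI
    simp only [hA, Finset.mem_filter] at hI
    have hiI : i ∈ I := hI.2
    have hcard : I.card = (I.erase i).card + 1 := by
      rw [Finset.card_erase_of_mem hiI]
      have : 1 ≤ I.card := Finset.card_pos.mpr ⟨i, hiI⟩
      omega
    have hle : (I.erase i).card + 1 ≤ n := by
      rw [← hcard]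
      simpa using Finset.card_le_card (Finset.subset_univ I)
    rw [biUnion_update_empty, Finset.insert_erase hiI,
      coeff_eq n (I.erase i).card hle, hcard]
    push_cast
    ring
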